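/- Let t = (t_{i,j,k})_{1 ≤ i < j < k ≤ n} be a family of integers such that the normal form map N_t : ℤ^n → G(t) is bijective, and let m : ℤ^n × ℤ^n → ℤ^n be the multiplication function defined by N_t(m(x, y)) = N_t(x)·N_t(y). Then for all x, y ∈ ℤ^n, the n-th coordinate satisfies m_n(x, y) = x_n + y_n + m_n(x̄, ȳ), where x̄ and ȳ are obtained from x and y by replacing their n-th coordinates with 0. In particular, m_n(x, y) − x_n − y_n depends only on the first n−1 coordinates of x and y. -/

import Mathlib

namespace HallPoly

/-- The ordered product `g_1^{e_1} ⋯ g_n^{e_n}` taken in increasing order of indices. -/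
def prodPow {Γ : Type*} [Group Γ] (n : ℕ) (g : Fin n → Γ) (e : Fin n → ℤ) : Γ :=
  ((List.finRange n).map fun k => g k ^ e k).prod

/-- The relators of the presented group `G(t)`:
`(a_i · a_j · a_{j+1}^{t_{i,j,j+1}} ⋯ a_n^{t_{i,j,n}})⁻¹ · (a_j · a_i)` for `1 ≤ i < j ≤ n`. -/
def rels (n : ℕ) (t : Fin n → Fin n → Fin n → ℤ) : Set (FreeGroup (Fin n)) :=
  { r | ∃ i j : Fin n, i < j ∧
      r = (FreeGroup.of i * FreeGroup.of j *
            prodPow n FreeGroup.of (fun k => if j < k then t i j k else 0))⁻¹ *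
          (FreeGroup.of j * FreeGroup.of i) }

/-- The presented group `G(t)` with generators `a_1, …, a_n` and relations
`a_j·a_i = a_i·a_j·a_{j+1}^{t_{i,j,j+1}} ⋯ a_n^{t_{i,j,n}}` for `1 ≤ i < j ≤ n`. -/
abbrev G (n : ℕ) (t : Fin n → Fin n → Fin n → ℤ) : Type := PresentedGroup (rels n t)

/-- The generators `a_1, …, a_n` of `G(t)`. -/
def a (n : ℕ) (t : Fin n → Fin n → Fin n → ℤ) (i : Fin n) : G n t :=
  PresentedGroup.of i

/-- The normal form map `N_t : ℤⁿ → G(t)`, `x ↦ a_1^{x_1} ⋯ a_n^{x_n}`. -/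
def N (n : ℕ) (t : Fin n → Fin n → Fin n → ℤ) (x : Fin n → ℤ) : G n t :=
  prodPow n (a n t) x

lemma prodPow_zero {Γ : Type*} [Group Γ] (n : ℕ) (g : Fin n → Γ) :
    prodPow n g (fun _ => 0) = 1 := by
  simp [prodPow]

/-- The last generator commutes with every generator. -/
lemma a_last_comm (m : ℕ) (t : Fin (m + 1) → Fin (m + 1) → Fin (m + 1) → ℤ)
    (i : Fin (m + 1)) :
    a (m + 1) t (Fin.last m) * a (m + 1) t i = a (m + 1) t i * a (m + 1) t (Fin.last m) := by
  rcases eq_or_lt_of_le (Fin.le_last i) with h | h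
  · rw [h]
  · have hr : ((FreeGroup.of i * FreeGroup.of (Fin.last m) *
        prodPow (m + 1) FreeGroup.of
          (fun k => if Fin.last m < k then t i (Fin.last m) k else 0))⁻¹ *
        (FreeGroup.of (Fin.last m) * FreeGroup.of i)) ∈ rels (m + 1) t :=
      ⟨i, Fin.last m, h, rfl⟩
    have h1 : (PresentedGroup.mk (rels (m + 1) t)
        ((FreeGroup.of i * FreeGroup.of (Fin.last m) *
          prodPow (m + 1) FreeGroup.of
            (fun k => if Fin.last m < k then t i (Fin.last m) k else 0))⁻¹ *
          (FreeGroup.of (Fin.last m) * FreeGroup.of i))) = 1 :=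
      (QuotientGroup.eq_one_iff _).2 (Subgroup.subset_normalClosure hr)
    have he : (fun k => if Fin.last m < k then t i (Fin.last m) k else 0) =
        (fun _ : Fin (m + 1) => (0 : ℤ)) := by
      funext k
      simp [(show k ≤ Fin.last m from Fin.le_last k).not_gt]
    rw [he, prodPow_zero, mul_one] at h1
    rw [map_mul, map_inv] at h1
    have := (inv_mul_eq_one.mp h1).symm
    -- this : PresentedGroup.mk _ (FreeGroup.of (last) * FreeGroup.of i) = mk (of i * of last)
    have h2 : a (m + 1) t (Fin.last m) * a (m + 1) t i =
        a (m + 1) t i * a (m + 1) t (Fin.last m) := by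
      simpa [a, PresentedGroup.of, map_mul] using this
    exact h2

/-- The last generator is central. -/
lemma a_last_central (m : ℕ) (t : Fin (m + 1) → Fin (m + 1) → Fin (m + 1) → ℤ)
    (g : G (m + 1) t) :
    a (m + 1) t (Fin.last m) * g = g * a (m + 1) t (Fin.last m) := by
  have hg : g ∈ Subgroup.closure (Set.range (PresentedGroup.of :
      Fin (m + 1) → G (m + 1) t)) := by
    rw [PresentedGroup.closure_range_of]; trivial
  induction hg using Subgroup.closure_induction with
  | mem x hx =>
    obtain ⟨i, rfl⟩ := hx
    exact a_last_comm m t i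
  | one => simp
  | mul x y _ _ hx hy => rw [← mul_assoc, hx, mul_assoc, hy, mul_assoc]
  | inv x _ hx =>
    have := hx
    calc a (m + 1) t (Fin.last m) * x⁻¹ = x⁻¹ * (x * a (m + 1) t (Fin.last m) * x⁻¹) := by
          group
      _ = x⁻¹ * (a (m + 1) t (Fin.last m) * x * x⁻¹) := by rw [this]
      _ = x⁻¹ * a (m + 1) t (Fin.last m) := by group

lemma a_last_pow_central (m : ℕ) (t : Fin (m + 1) → Fin (m + 1) → Fin (m + 1) → ℤ)
    (c : ℤ) (g : G (m + 1) t) :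
    a (m + 1) t (Fin.last m) ^ c * g = g * a (m + 1) t (Fin.last m) ^ c :=
  ((show Commute (a (m + 1) t (Fin.last m)) g from a_last_central m t g).zpow_left c).eq

/-- Splitting off the last factor of the normal form. -/
lemma N_split (m : ℕ) (t : Fin (m + 1) → Fin (m + 1) → Fin (m + 1) → ℤ)
    (z : Fin (m + 1) → ℤ) :
    N (m + 1) t z =
      N (m + 1) t (Function.update z (Fin.last m) 0) *
        a (m + 1) t (Fin.last m) ^ z (Fin.last m) := by
  unfold N prodPow
  rw [List.finRange_succ_last]
  simp only [List.map_append, List.map_map, List.prod_append, List.map_singleton,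
    List.prod_singleton]
  have hcast : ∀ k : Fin m,
      (Function.update z (Fin.last m) 0) k.castSucc = z k.castSucc := by
    intro k
    exact Function.update_of_ne (by simp [Fin.ext_iff, Fin.lt_iff_val_lt_val, (k.isLt).ne]) _ _
  have h1 : ((List.finRange m).map
        ((fun k => a (m + 1) t k ^ (Function.update z (Fin.last m) 0) k) ∘ Fin.castSucc)) =
      ((List.finRange m).map ((fun k => a (m + 1) t k ^ z k) ∘ Fin.castSucc)) := by
    apply List.map_congr_left
    intro k _
    simp [Function.comp, hcast k]
  rw [h1]
  simp

lemma N_update (m : ℕ) (t : Fin (m + 1) → Fin (m + 1) → Fin (m + 1) → ℤ)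
    (z : Fin (m + 1) → ℤ) (c : ℤ) :
    N (m + 1) t (Function.update z (Fin.last m) c) =
      N (m + 1) t (Function.update z (Fin.last m) 0) *
        a (m + 1) t (Fin.last m) ^ c := by
  have := N_split m t (Function.update z (Fin.last m) c)
  simpa [Function.update_idem] using this

/-- Remark 4.4: if `G(t)` is consistent and `mul` is the multiplication function on normal
form exponent vectors (defined by `N_t (mul x y) = N_t x · N_t y`), then the last coordinate
satisfies `mul x y n = x n + y n + mul x̄ ȳ n`, where `x̄, ȳ` are obtained from `x, y` by
setting the last coordinate to `0`.  In particular `mul x y n - x n - y n` depends only on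
the first `n - 1` coordinates of `x` and `y`. -/
theorem mul_last_coordinate (m : ℕ) (t : Fin (m + 1) → Fin (m + 1) → Fin (m + 1) → ℤ)
    (hN : Function.Bijective (N (m + 1) t))
    (mul : (Fin (m + 1) → ℤ) → (Fin (m + 1) → ℤ) → (Fin (m + 1) → ℤ))
    (hmul : ∀ x y : Fin (m + 1) → ℤ, N (m + 1) t (mul x y) = N (m + 1) t x * N (m + 1) t y) :
    ∀ x y : Fin (m + 1) → ℤ,
      mul x y (Fin.last m) =
        x (Fin.last m) + y (Fin.last m) +
          mul (Function.update x (Fin.last m) 0) (Function.update y (Fin.last m) 0)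
            (Fin.last m) := by
  intro x y
  set L := Fin.last m
  set xb := Function.update x L 0
  set yb := Function.update y L 0
  set w := mul xb yb
  set aL := a (m + 1) t L
  have key : N (m + 1) t (mul x y) =
      N (m + 1) t (Function.update w L (w L + x L + y L)) := by
    rw [hmul, N_split m t x, N_split m t y, N_update m t w]
    have hw : N (m + 1) t w = N (m + 1) t xb * N (m + 1) t yb := hmul xb yb
    rw [N_split m t w] at hw
    calc N (m + 1) t xb * aL ^ x L * (N (m + 1) t yb * aL ^ y L)
        = N (m + 1) t xb * N (m + 1) t yb * (aL ^ x L * aL ^ y L) := by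
          rw [mul_assoc, mul_assoc, ← mul_assoc (aL ^ x L),
            a_last_pow_central m t (x L) (N (m + 1) t yb), mul_assoc]
      _ = N (m + 1) t (Function.update w L 0) * aL ^ w L * (aL ^ x L * aL ^ y L) := by
          rw [← hw]
      _ = N (m + 1) t (Function.update w L 0) * aL ^ (w L + x L + y L) := by
          rw [mul_assoc, ← zpow_add, ← zpow_add, add_assoc]
  have heq := hN.injective key
  have : mul x y L = Function.update w L (w L + x L + y L) L := by rw [heq]
  rw [this, Function.update_self]
  ring

end HallPoly
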